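/- Let n, k be positive integers with n ≥ 8k and let i ∈ {1,...,n} be such that k·(i/n)·((n−i)/n) < 1 and i = n/2. If H ~ Hyp(n,i,k), then P(H ≥ i·k/n) ≥ k/n. -/

import Mathlib

/-- The probability mass function of the hypergeometric distribution `Hyp(n,i,k)`. -/
noncomputable def hypPMF (n i k j : ℕ) : ℝ :=
  ((Nat.choose i j : ℝ) * (Nat.choose (n - i) (k - j) : ℝ)) / (Nat.choose n k : ℝ)

/-- `P(H ≥ t)` for `H ~ Hyp(n,i,k)`. -/
noncomputable def hypTail (n i k : ℕ) (t : ℝ) : ℝ :=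
  ∑ j ∈ Finset.range (k + 1), if t ≤ (j : ℝ) then hypPMF n i k j else 0

lemma hypPMF_nonneg (n i k j : ℕ) : 0 ≤ hypPMF n i k j := by
  unfold hypPMF; positivity

lemma tail_ge_single (n i k j0 : ℕ) (t : ℝ) (hj : j0 ≤ k) (ht : t ≤ (j0 : ℝ)) :
    hypPMF n i k j0 ≤ hypTail n i k t := by
  unfold hypTail
  have h := Finset.single_le_sum
    (f := fun j : ℕ => if t ≤ (j : ℝ) then hypPMF n i k j else 0)
    (fun j _ => by split_ifs; exacts [hypPMF_nonneg n i k j, le_rfl])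
    (show j0 ∈ Finset.range (k+1) by simp; omega)
  simpa [if_pos ht] using h

/-- If `n ≥ 8k`, `i ∈ {1,…,n}`, `k·(i/n)·((n−i)/n) < 1` and `i = n/2`, then for
`H ~ Hyp(n,i,k)` one has `P(H ≥ i·k/n) ≥ k/n`. -/
theorem hyp_tail_ge_of_var_small_i_eq (n k i : ℕ) (hn : 0 < n) (hk : 0 < k)
    (h8 : 8 * k ≤ n) (hi1 : 1 ≤ i) (hi2 : i ≤ n)
    (hvar : (k : ℝ) * ((i : ℝ) / n) * (((n : ℝ) - i) / n) < 1)
    (hhalf : 2 * i = n) :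
    (k : ℝ) / n ≤ hypTail n i k ((i * k : ℝ) / n) := by
  subst hhalf
  have hiR : (0:ℝ) < i := by exact_mod_cast hi1
  have hnR : ((2*i : ℕ) : ℝ) = 2 * i := by push_cast; ring
  have h2i : (0:ℝ) < ((2*i : ℕ) : ℝ) := by rw [hnR]; linarith
  have hsub : 2*i - i = i := by omega
  have hk4 : k < 4 := by
    rw [hnR] at hvar
    have h1 : ((i:ℝ)) / (2*i) = 1/2 := by rw [div_eq_iff (by linarith)]; ring
    rw [show (2*(i:ℝ) - i) = i by ring, h1] at hvar
    have : (k:ℝ) < 4 := by nlinarith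
    exact_mod_cast this
  -- exact cast values of binomial coefficients
  have h2nat : Nat.choose (2*i) 2 * 2 = 2*i*(2*i-1) := by
    simpa [Nat.choose_one_right] using Nat.choose_succ_right_eq (2*i) 1
  have e2 : (Nat.choose (2*i) 2 : ℝ) * 2 = 2*i*(2*i-1) := by
    calc (Nat.choose (2*i) 2 : ℝ) * 2 = ((Nat.choose (2*i) 2 * 2 : ℕ) : ℝ) := by
          push_cast; ring
      _ = ((2*i*(2*i-1) : ℕ) : ℝ) := by rw [h2nat]
      _ = 2*i*(2*i-1) := by
          rw [Nat.cast_mul, Nat.cast_sub (by omega : 1 ≤ 2*i)]; push_cast; ring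
  have h3nat : Nat.choose (2*i) 3 * 6 = 2*i*(2*i-1)*(2*i-2) := by
    have h3 : Nat.choose (2*i) 3 * 3 = Nat.choose (2*i) 2 * (2*i-2) :=
      Nat.choose_succ_right_eq (2*i) 2
    have h6 : Nat.choose (2*i) 3 * 6 = Nat.choose (2*i) 2 * (2*i-2) * 2 := by omega
    rw [h6, mul_right_comm, h2nat]
  have e3 : (Nat.choose (2*i) 3 : ℝ) * 6 = 2*i*(2*i-1)*(2*i-2) := by
    calc (Nat.choose (2*i) 3 : ℝ) * 6 = ((Nat.choose (2*i) 3 * 6 : ℕ) : ℝ) := by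
          push_cast; ring
      _ = ((2*i*(2*i-1)*(2*i-2) : ℕ) : ℝ) := by rw [h3nat]
      _ = 2*i*(2*i-1)*(2*i-2) := by
          rw [Nat.cast_mul, Nat.cast_mul, Nat.cast_sub (by omega : 1 ≤ 2*i),
            Nat.cast_sub (by omega : 2 ≤ 2*i)]; push_cast; ring
  have ei2nat : Nat.choose i 2 * 2 = i*(i-1) := by
    simpa [Nat.choose_one_right] using Nat.choose_succ_right_eq i 1
  have ei2 : (Nat.choose i 2 : ℝ) * 2 = i*(i-1) := by
    calc (Nat.choose i 2 : ℝ) * 2 = ((Nat.choose i 2 * 2 : ℕ) : ℝ) := by push_cast; ring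
      _ = ((i*(i-1) : ℕ) : ℝ) := by rw [ei2nat]
      _ = i*(i-1) := by rw [Nat.cast_mul, Nat.cast_sub hi1]; push_cast; ring
  interval_cases k
  · -- k = 1
    have hi4 : (4:ℝ) ≤ i := by exact_mod_cast (by omega : 4 ≤ i)
    refine le_trans ?_ (tail_ge_single (2*i) i 1 1 _ le_rfl ?_)
    · unfold hypPMF
      rw [hsub]
      have hcpos : (0:ℝ) < (Nat.choose (2*i) 1 : ℝ) := by
        exact_mod_cast Nat.choose_pos (by omega : 1 ≤ 2*i)
      rw [div_le_div_iff₀ h2i hcpos]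
      push_cast [Nat.choose_one_right, Nat.choose_zero_right]
      nlinarith
    · rw [div_le_iff₀ h2i]; push_cast; linarith
  · -- k = 2
    have hi4 : (8:ℝ) ≤ i := by exact_mod_cast (by omega : 8 ≤ i)
    refine le_trans ?_ (tail_ge_single (2*i) i 2 1 _ (by omega) ?_)
    · unfold hypPMF
      rw [hsub]
      have hcpos : (0:ℝ) < (Nat.choose (2*i) 2 : ℝ) := by
        exact_mod_cast Nat.choose_pos (by omega : 2 ≤ 2*i)
      rw [div_le_div_iff₀ h2i hcpos]
      push_cast [Nat.choose_one_right]
      nlinarith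
    · rw [div_le_iff₀ h2i]; push_cast; linarith
  · -- k = 3
    have hi4 : (12:ℝ) ≤ i := by exact_mod_cast (by omega : 12 ≤ i)
    refine le_trans ?_ (tail_ge_single (2*i) i 3 2 _ (by omega) ?_)
    · unfold hypPMF
      rw [hsub]
      have hcpos : (0:ℝ) < (Nat.choose (2*i) 3 : ℝ) := by
        exact_mod_cast Nat.choose_pos (by omega : 3 ≤ 2*i)
      rw [div_le_div_iff₀ h2i hcpos]
      push_cast [Nat.choose_one_right]
      nlinarith
    · rw [div_le_iff₀ h2i]; push_cast; linarith
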